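/- Let p be a prime and k a field of characteristic p with [k : k^p] = ∞, and let A be the subring of k⟦t⟧ consisting of those power series Σ_{n≥0} aₙtⁿ with [k^p(a₀,a₁,…) : k^p] < ∞. Then A ≠ k⟦t⟧, and for any element c ∈ k⟦t⟧ \ A, the integral closure of A in the finite field extension L := K(c) of K is not a finitely generated A-module. In particular, A is not a Japanese ring. -/

import Mathlib

set_option synthInstance.maxHeartbeats 1000000
set_option maxHeartbeats 2000000

variable (k : Type*) [Field k] (p : ℕ) [Fact p.Prime] [CharP k p]

/-- The subfield `k^p` of `p`-th powers of the field `k` (of characteristic `p`). -/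
noncomputable def pthPowerSubfield : Subfield k := (frobenius k p).fieldRange

variable {k p}

lemma isIntegral_pthPowerSubfield (a : k) : IsIntegral ↥(pthPowerSubfield k p) a := by
  refine ⟨Polynomial.X ^ p - Polynomial.C ⟨a ^ p, a, rfl⟩,
    Polynomial.monic_X_pow_sub_C _ (Fact.out : p.Prime).ne_zero, ?_⟩
  simp only [Polynomial.eval₂_sub, Polynomial.eval₂_pow, Polynomial.eval₂_X, Polynomial.eval₂_C]
  exact sub_eq_zero.mpr rfl

variable (k p) in
/-- The field `k^p(a₀, a₁, …)` generated over `k^p` by the coefficients of a power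
series `f` is a finite extension of `k^p`. -/
def HasFiniteCoeffField (f : PowerSeries k) : Prop :=
  FiniteDimensional ↥(pthPowerSubfield k p)
    ↥(IntermediateField.adjoin ↥(pthPowerSubfield k p)
      (Set.range fun n => PowerSeries.coeff n f))

lemma hasFiniteCoeffField_of_mem {f : PowerSeries k}
    (E : IntermediateField ↥(pthPowerSubfield k p) k) (hE : FiniteDimensional ↥(pthPowerSubfield k p) E)
    (h : ∀ n, PowerSeries.coeff n f ∈ E) : HasFiniteCoeffField k p f := by
  have hle : IntermediateField.adjoin ↥(pthPowerSubfield k p)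
      (Set.range fun n => PowerSeries.coeff n f) ≤ E := by
    rw [IntermediateField.adjoin_le_iff]
    rintro x ⟨n, rfl⟩; exact h n
  exact FiniteDimensional.of_injective
    (IntermediateField.inclusion hle).toLinearMap
    (IntermediateField.inclusion_injective hle)

variable (k p) in
/-- The subring `A ⊆ k⟦t⟧` of power series whose coefficients generate a finite
extension of `k^p`. -/
noncomputable def finiteCoeffSubring : Subring (PowerSeries k) where
  carrier := {f | HasFiniteCoeffField k p f}
  zero_mem' := hasFiniteCoeffField_of_mem ⊥ inferInstance (fun n => by
    rw [map_zero]; exact zero_mem ⊥)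
  one_mem' := hasFiniteCoeffField_of_mem ⊥ inferInstance (fun n => by
    rw [PowerSeries.coeff_one]
    split
    · exact one_mem ⊥
    · exact zero_mem ⊥)
  add_mem' := by
    intro f g hf hg
    haveI : FiniteDimensional ↥(pthPowerSubfield k p)
        ↥(IntermediateField.adjoin ↥(pthPowerSubfield k p)
          (Set.range fun n => PowerSeries.coeff n f)) := hf
    haveI : FiniteDimensional ↥(pthPowerSubfield k p)
        ↥(IntermediateField.adjoin ↥(pthPowerSubfield k p)
          (Set.range fun n => PowerSeries.coeff n g)) := hg
    refine hasFiniteCoeffField_of_mem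
      (IntermediateField.adjoin _ (Set.range fun n => PowerSeries.coeff n f) ⊔
        IntermediateField.adjoin _ (Set.range fun n => PowerSeries.coeff n g))
      inferInstance fun n => ?_
    rw [map_add]
    exact add_mem
      (le_sup_left (α := IntermediateField _ k) (IntermediateField.subset_adjoin _ _ ⟨n, rfl⟩))
      (le_sup_right (α := IntermediateField _ k) (IntermediateField.subset_adjoin _ _ ⟨n, rfl⟩))
  mul_mem' := by
    intro f g hf hg
    haveI : FiniteDimensional ↥(pthPowerSubfield k p)
        ↥(IntermediateField.adjoin ↥(pthPowerSubfield k p)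
          (Set.range fun n => PowerSeries.coeff n f)) := hf
    haveI : FiniteDimensional ↥(pthPowerSubfield k p)
        ↥(IntermediateField.adjoin ↥(pthPowerSubfield k p)
          (Set.range fun n => PowerSeries.coeff n g)) := hg
    refine hasFiniteCoeffField_of_mem
      (IntermediateField.adjoin _ (Set.range fun n => PowerSeries.coeff n f) ⊔
        IntermediateField.adjoin _ (Set.range fun n => PowerSeries.coeff n g))
      inferInstance fun n => ?_
    rw [PowerSeries.coeff_mul]
    refine sum_mem fun c _ => mul_mem
      (le_sup_left (α := IntermediateField _ k) (IntermediateField.subset_adjoin _ _ ⟨c.1, rfl⟩))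
      (le_sup_right (α := IntermediateField _ k) (IntermediateField.subset_adjoin _ _ ⟨c.2, rfl⟩))
  neg_mem' := by
    intro f hf
    haveI : FiniteDimensional ↥(pthPowerSubfield k p)
        ↥(IntermediateField.adjoin ↥(pthPowerSubfield k p)
          (Set.range fun n => PowerSeries.coeff n f)) := hf
    refine hasFiniteCoeffField_of_mem
      (IntermediateField.adjoin _ (Set.range fun n => PowerSeries.coeff n f))
      inferInstance fun n => ?_
    rw [map_neg]
    exact neg_mem (IntermediateField.subset_adjoin _ _ ⟨n, rfl⟩)

variable (k p) in
/-- The subfield `L = K(c)` of `k((t))` generated by the subring `A = finiteCoeffSubring`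
(hence by its fraction field `K`) together with the element `c ∈ k⟦t⟧`. -/
noncomputable def adjoinElemSubfield (c : PowerSeries k) : Subfield (LaurentSeries k) :=
  Subfield.closure
    ((HahnSeries.ofPowerSeries ℤ k) '' (finiteCoeffSubring k p : Set (PowerSeries k)) ∪
      {HahnSeries.ofPowerSeries ℤ k c})

variable (k p) in
/-- The canonical inclusion `A → L = K(c)`. -/
noncomputable def toAdjoinElemSubfield (c : PowerSeries k) :
    ↥(finiteCoeffSubring k p) →+* ↥(adjoinElemSubfield k p c) :=
  RingHom.codRestrict
    ((HahnSeries.ofPowerSeries ℤ k).comp (finiteCoeffSubring k p).subtype)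
    (adjoinElemSubfield k p c)
    (fun a => Subfield.subset_closure (Or.inl ⟨a, a.2, rfl⟩))

section Groundwork

lemma mem_finiteCoeffSubring {f : PowerSeries k} :
    f ∈ finiteCoeffSubring k p ↔ HasFiniteCoeffField k p f := Iff.rfl

lemma mem_finiteCoeffSubring_of_forall {f : PowerSeries k}
    (E : IntermediateField ↥(pthPowerSubfield k p) k)
    (hE : FiniteDimensional ↥(pthPowerSubfield k p) E)
    (h : ∀ n, PowerSeries.coeff n f ∈ E) : f ∈ finiteCoeffSubring k p :=
  hasFiniteCoeffField_of_mem E hE h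

/-- the coefficient field of `f` -/
noncomputable def coeffField (f : PowerSeries k) : IntermediateField ↥(pthPowerSubfield k p) k :=
  IntermediateField.adjoin ↥(pthPowerSubfield k p) (Set.range fun n => PowerSeries.coeff n f)

lemma coeff_mem_coeffField (f : PowerSeries k) (n : ℕ) :
    PowerSeries.coeff n f ∈ (coeffField f : IntermediateField ↥(pthPowerSubfield k p) k) :=
  IntermediateField.subset_adjoin _ _ ⟨n, rfl⟩

lemma finiteDimensional_coeffField {f : PowerSeries k} (hf : f ∈ finiteCoeffSubring k p) :
    FiniteDimensional ↥(pthPowerSubfield k p) ↥(coeffField f : IntermediateField ↥(pthPowerSubfield k p) k) := hf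

lemma shift_mem_finiteCoeffSubring {f : PowerSeries k} (hf : f ∈ finiteCoeffSubring k p) (m : ℕ) :
    (PowerSeries.mk fun n => PowerSeries.coeff (n + m) f) ∈ finiteCoeffSubring k p := by
  haveI := finiteDimensional_coeffField hf
  exact mem_finiteCoeffSubring_of_forall (coeffField f) inferInstance
    (fun n => by rw [PowerSeries.coeff_mk]; exact coeff_mem_coeffField f _)

lemma X_mem_finiteCoeffSubring : (PowerSeries.X : PowerSeries k) ∈ finiteCoeffSubring k p := by
  refine mem_finiteCoeffSubring_of_forall ⊥ inferInstance (fun n => ?_)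
  rw [PowerSeries.coeff_X]
  split
  · exact one_mem ⊥
  · exact zero_mem ⊥

end Groundwork
section Units

/-- A power series in `A` with nonzero constant term has an inverse in `A`. -/
lemma exists_inv_finiteCoeffSubring {f : PowerSeries k} (hf : f ∈ finiteCoeffSubring k p)
    (h0 : PowerSeries.constantCoeff f ≠ 0) :
    ∃ g ∈ finiteCoeffSubring k p, f * g = 1 := by
  haveI := finiteDimensional_coeffField hf
  set E := (coeffField f : IntermediateField ↥(pthPowerSubfield k p) k)
  set F : PowerSeries E := PowerSeries.mk fun n => ⟨PowerSeries.coeff n f, coeff_mem_coeffField f n⟩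
  have hmap : PowerSeries.map (algebraMap E k) F = f := by
    ext n
    simp [F, PowerSeries.coeff_map, PowerSeries.coeff_mk]
  have hF0 : PowerSeries.constantCoeff F ≠ 0 := by
    intro h
    apply h0
    have : PowerSeries.constantCoeff f = algebraMap E k (PowerSeries.constantCoeff F) := by
      rw [← hmap, ← PowerSeries.coeff_zero_eq_constantCoeff_apply,
        ← PowerSeries.coeff_zero_eq_constantCoeff_apply, PowerSeries.coeff_map]
    rw [this, h, map_zero]
  have hU : IsUnit F := PowerSeries.isUnit_iff_constantCoeff.mpr (isUnit_iff_ne_zero.mpr hF0)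
  obtain ⟨u, hu⟩ := hU
  refine ⟨PowerSeries.map (algebraMap E k) ↑u⁻¹, ?_, ?_⟩
  · refine mem_finiteCoeffSubring_of_forall E inferInstance (fun n => ?_)
    rw [PowerSeries.coeff_map]
    exact (PowerSeries.coeff n (↑u⁻¹ : PowerSeries E)).2
  · rw [← hmap, ← map_mul, ← hu, Units.mul_inv, map_one]

/-- Every nonzero element of `A` is `X ^ n` times a unit of `A`. -/
lemma exists_factorization_finiteCoeffSubring {f : PowerSeries k}
    (hf : f ∈ finiteCoeffSubring k p) (hf0 : f ≠ 0) :
    ∃ (n : ℕ) (u g : PowerSeries k), u ∈ finiteCoeffSubring k p ∧ g ∈ finiteCoeffSubring k p ∧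
      f = PowerSeries.X ^ n * u ∧ u * g = 1 := by
  have hex : ∃ n, PowerSeries.coeff n f ≠ 0 := by
    by_contra h
    push_neg at h
    exact hf0 (PowerSeries.ext fun n => by rw [h n, map_zero])
  classical
  set n := Nat.find hex with hn
  set u : PowerSeries k := PowerSeries.mk fun i => PowerSeries.coeff (i + n) f with hu
  have hun : u ∈ finiteCoeffSubring k p := shift_mem_finiteCoeffSubring hf n
  have hfu : f = PowerSeries.X ^ n * u := by
    ext i
    rw [PowerSeries.coeff_X_pow_mul']
    split
    · rw [hu, PowerSeries.coeff_mk, Nat.sub_add_cancel ‹_›]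
    · exact not_ne_iff.mp (Nat.find_min hex (not_le.mp ‹_›))
  have hu0 : PowerSeries.constantCoeff u ≠ 0 := by
    have := Nat.find_spec hex
    simpa [hu, ← PowerSeries.coeff_zero_eq_constantCoeff] using this
  obtain ⟨g, hg, hug⟩ := exists_inv_finiteCoeffSubring hun hu0
  exact ⟨n, u, g, hun, hg, hfu, hug⟩

end Units
section Frobenius

lemma coeff_pow_p_mem (f : PowerSeries k) (n : ℕ) :
    PowerSeries.coeff n (f ^ p) ∈ pthPowerSubfield k p := by
  have hp0 : 0 < p := (Fact.out : p.Prime).pos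
  set T : Polynomial k := PowerSeries.trunc (n + 1) f
  have h1 : PowerSeries.coeff n (f ^ p) = (PowerSeries.trunc (n + 1) (f ^ p)).coeff n := by
    rw [PowerSeries.coeff_trunc, if_pos (Nat.lt_succ_self n)]
  rw [h1, ← PowerSeries.trunc_trunc_pow f (n + 1) p, PowerSeries.coeff_trunc,
    if_pos (Nat.lt_succ_self n), ← Polynomial.coe_pow, Polynomial.coeff_coe,
    ← Polynomial.map_frobenius_expand, Polynomial.coeff_map]
  exact ⟨(Polynomial.expand k p T).coeff n, rfl⟩

lemma pow_p_mem_finiteCoeffSubring (f : PowerSeries k) :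
    f ^ p ∈ finiteCoeffSubring k p := by
  refine mem_finiteCoeffSubring_of_forall ⊥ inferInstance (fun n => ?_)
  rw [IntermediateField.mem_bot]
  exact ⟨⟨_, coeff_pow_p_mem f n⟩, rfl⟩

end Frobenius
section PowSpan

variable (k p) in
/-- The `A`-submodule of `k⟦t⟧` spanned by `1, c, …, c^(p-1)`. -/
noncomputable def powSpan (c : PowerSeries k) :
    Submodule ↥(finiteCoeffSubring k p) (PowerSeries k) :=
  Submodule.span ↥(finiteCoeffSubring k p) (Set.range fun j : Fin p => c ^ (j : ℕ))

lemma smul_eq_mul_finiteCoeffSubring (a : ↥(finiteCoeffSubring k p)) (x : PowerSeries k) :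
    a • x = (a : PowerSeries k) * x := rfl

lemma pow_mem_powSpan (c : PowerSeries k) {j : ℕ} (hj : j < p) : c ^ j ∈ powSpan k p c :=
  Submodule.subset_span ⟨⟨j, hj⟩, rfl⟩

lemma one_mem_powSpan (c : PowerSeries k) : (1 : PowerSeries k) ∈ powSpan k p c := by
  simpa using pow_mem_powSpan c (Fact.out : p.Prime).pos

lemma self_mem_powSpan (c : PowerSeries k) : c ∈ powSpan k p c := by
  simpa using pow_mem_powSpan c (Fact.out : p.Prime).one_lt

lemma mem_powSpan_of_mem {a : PowerSeries k} (ha : a ∈ finiteCoeffSubring k p)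
    (c : PowerSeries k) : a ∈ powSpan k p c := by
  simpa [smul_eq_mul_finiteCoeffSubring] using
    (powSpan k p c).smul_mem ⟨a, ha⟩ (one_mem_powSpan c)

lemma mul_mem_powSpan (c : PowerSeries k) {x y : PowerSeries k}
    (hx : x ∈ powSpan k p c) (hy : y ∈ powSpan k p c) : x * y ∈ powSpan k p c := by
  have key : powSpan k p c * powSpan k p c ≤ powSpan k p c := by
    rw [powSpan, Submodule.span_mul_span, Submodule.span_le]
    rintro z hz
    rw [Set.mem_mul] at hz
    obtain ⟨x, ⟨i, rfl⟩, y, ⟨j, rfl⟩, rfl⟩ := hz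
    rw [← pow_add]
    by_cases h : (i : ℕ) + (j : ℕ) < p
    · exact pow_mem_powSpan c h
    · push_neg at h
      have h2 : (i : ℕ) + (j : ℕ) - p < p := by
        have hi := i.2; have hj := j.2; omega
      have : c ^ ((i : ℕ) + (j : ℕ)) = c ^ p * c ^ ((i : ℕ) + (j : ℕ) - p) := by
        rw [← pow_add]; congr 1; omega
      rw [this, ← smul_eq_mul_finiteCoeffSubring ⟨c ^ p, pow_p_mem_finiteCoeffSubring c⟩]
      exact (powSpan k p c).smul_mem _ (pow_mem_powSpan c h2)
  exact key (Submodule.mul_mem_mul hx hy)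

lemma pow_mem_powSpan_of_mem (c : PowerSeries k) {x : PowerSeries k}
    (hx : x ∈ powSpan k p c) (m : ℕ) : x ^ m ∈ powSpan k p c := by
  induction m with
  | zero => simpa using one_mem_powSpan c
  | succ m ih => rw [pow_succ]; exact mul_mem_powSpan c ih hx

end PowSpan
section Loc

variable (k) in
/-- The canonical map `k⟦t⟧ → k((t))`. -/
noncomputable def toLS : PowerSeries k →+* LaurentSeries k := HahnSeries.ofPowerSeries ℤ k

lemma toLS_injective : Function.Injective (toLS k) := HahnSeries.ofPowerSeries_injective

lemma toLS_X_ne_zero : toLS k PowerSeries.X ≠ 0 := fun h =>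
  PowerSeries.X_ne_zero (toLS_injective (by rw [h, map_zero]))

/-- Localization of a multiplicatively closed `A`-submodule-like set `S ⊆ k⟦t⟧` at
powers of `t`, as a subfield of `k((t))`. -/
noncomputable def locSubfield (S : Set (PowerSeries k)) (h1 : (1 : PowerSeries k) ∈ S)
    (hadd : ∀ x ∈ S, ∀ y ∈ S, x + y ∈ S)
    (hmul : ∀ x ∈ S, ∀ y ∈ S, x * y ∈ S)
    (hsmul : ∀ a ∈ finiteCoeffSubring k p, ∀ x ∈ S, a * x ∈ S) :
    Subfield (LaurentSeries k) where
  carrier := {x | ∃ (n : ℕ) (b : PowerSeries k), b ∈ S ∧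
    x * (toLS k PowerSeries.X) ^ n = toLS k b}
  one_mem' := ⟨0, 1, h1, by rw [pow_zero, mul_one, map_one]⟩
  zero_mem' := ⟨0, 0, by simpa using hsmul 0 (zero_mem _) 1 h1, by rw [map_zero, zero_mul]⟩
  add_mem' := by
    rintro x y ⟨n, b, hb, hx⟩ ⟨m, b', hb', hy⟩
    refine ⟨n + m, PowerSeries.X ^ m * b + PowerSeries.X ^ n * b', ?_, ?_⟩
    · exact hadd _ (hsmul _ (pow_mem X_mem_finiteCoeffSubring m) b hb)
        _ (hsmul _ (pow_mem X_mem_finiteCoeffSubring n) b' hb')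
    · calc (x + y) * (toLS k PowerSeries.X) ^ (n + m)
          = (x * (toLS k PowerSeries.X) ^ n) * (toLS k PowerSeries.X) ^ m
            + (y * (toLS k PowerSeries.X) ^ m) * (toLS k PowerSeries.X) ^ n := by
            rw [pow_add]; ring
        _ = toLS k (PowerSeries.X ^ m * b + PowerSeries.X ^ n * b') := by
            rw [hx, hy, map_add, map_mul, map_mul, map_pow, map_pow]; ring
  neg_mem' := by
    rintro x ⟨n, b, hb, hx⟩
    refine ⟨n, (-1) * b, by simpa using hsmul (-1) (neg_mem (one_mem _)) b hb, ?_⟩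
    rw [map_mul, map_neg, map_one, ← hx]; ring
  mul_mem' := by
    rintro x y ⟨n, b, hb, hx⟩ ⟨m, b', hb', hy⟩
    refine ⟨n + m, b * b', hmul b hb b' hb', ?_⟩
    rw [pow_add, map_mul, ← hx, ← hy]; ring
  inv_mem' := by
    intro x hx
    obtain ⟨n, b, hb, heq⟩ := hx
    by_cases hx0 : x = 0
    · exact ⟨0, 0, by simpa using hsmul 0 (zero_mem _) 1 h1,
        by rw [hx0, inv_zero, zero_mul, map_zero]⟩
    have hp0 : 0 < p := (Fact.out : p.Prime).pos
    have hb0 : b ≠ 0 := by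
      rintro rfl
      rw [map_zero] at heq
      exact hx0 ((mul_eq_zero.mp heq).resolve_right (pow_ne_zero n toLS_X_ne_zero))
    have hbp0 : b ^ p ≠ 0 := pow_ne_zero p hb0
    obtain ⟨e, u, g, hu, hg, hbp, hug⟩ :=
      exists_factorization_finiteCoeffSubring (pow_p_mem_finiteCoeffSubring b) hbp0
    have hbpow : ∀ m : ℕ, b ^ m ∈ S := by
      intro m
      induction m with
      | zero => simpa using h1
      | succ m ih => rw [pow_succ]; exact hmul _ ih _ hb
    set b' : PowerSeries k := (PowerSeries.X ^ n * g) * b ^ (p - 1) with hb'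
    have hb'S : b' ∈ S :=
      hsmul _ (mul_mem (pow_mem X_mem_finiteCoeffSubring n) hg) _ (hbpow (p - 1))
    refine ⟨e, b', hb'S, ?_⟩
    have hkey : b * b' = PowerSeries.X ^ e * PowerSeries.X ^ n := by
      have h3 : b ^ (p - 1) * b = b ^ p := by
        rw [← pow_succ]; congr 1; omega
      calc b * b' = (b ^ (p - 1) * b) * g * PowerSeries.X ^ n := by rw [hb']; ring
        _ = PowerSeries.X ^ e * (u * g) * PowerSeries.X ^ n := by rw [h3, hbp]; ring
        _ = PowerSeries.X ^ e * PowerSeries.X ^ n := by rw [hug, mul_one]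
    have h2 : (x * toLS k b') * (toLS k PowerSeries.X) ^ n
        = (toLS k PowerSeries.X) ^ e * (toLS k PowerSeries.X) ^ n := by
      calc (x * toLS k b') * (toLS k PowerSeries.X) ^ n
          = (x * (toLS k PowerSeries.X) ^ n) * toLS k b' := by ring
        _ = toLS k (b * b') := by rw [heq, ← map_mul]
        _ = (toLS k PowerSeries.X) ^ e * (toLS k PowerSeries.X) ^ n := by
            rw [hkey, map_mul, map_pow, map_pow]
    have h4 : x * toLS k b' = (toLS k PowerSeries.X) ^ e :=
      mul_right_cancel₀ (pow_ne_zero n toLS_X_ne_zero) h2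
    rw [← h4, ← mul_assoc, inv_mul_cancel₀ hx0, one_mul]

end Loc
section Inst

variable (k p) in
/-- The fraction field `K` of `A` inside `k((t))`. -/
noncomputable def fracSubfield : Subfield (LaurentSeries k) :=
  locSubfield (finiteCoeffSubring k p : Set (PowerSeries k)) (one_mem _)
    (fun _ hx _ hy => add_mem hx hy) (fun _ hx _ hy => mul_mem hx hy)
    (fun _ ha _ hx => mul_mem ha hx)

variable (k p) in
/-- The localization of `A[c]` at powers of `t` inside `k((t))`. -/
noncomputable def locPowSubfield (c : PowerSeries k) : Subfield (LaurentSeries k) :=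
  locSubfield (powSpan k p c : Set (PowerSeries k)) (one_mem_powSpan c)
    (fun _ hx _ hy => add_mem hx hy) (fun x hx y hy => mul_mem_powSpan c hx hy)
    (fun a ha x hx => by
      simpa [smul_eq_mul_finiteCoeffSubring] using (powSpan k p c).smul_mem ⟨a, ha⟩ hx)

lemma mem_fracSubfield_iff {x : LaurentSeries k} :
    x ∈ fracSubfield k p ↔ ∃ (n : ℕ) (b : PowerSeries k), b ∈ finiteCoeffSubring k p ∧
      x * (toLS k PowerSeries.X) ^ n = toLS k b := Iff.rfl

lemma mem_locPowSubfield_iff {c : PowerSeries k} {x : LaurentSeries k} :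
    x ∈ locPowSubfield k p c ↔ ∃ (n : ℕ) (b : PowerSeries k), b ∈ powSpan k p c ∧
      x * (toLS k PowerSeries.X) ^ n = toLS k b := Iff.rfl

lemma toLS_mem_fracSubfield {a : PowerSeries k} (ha : a ∈ finiteCoeffSubring k p) :
    toLS k a ∈ fracSubfield k p :=
  ⟨0, a, ha, by rw [pow_zero, mul_one]⟩

lemma adjoinElemSubfield_le_locPowSubfield (c : PowerSeries k) :
    adjoinElemSubfield k p c ≤ locPowSubfield k p c := by
  rw [adjoinElemSubfield, Subfield.closure_le]
  rintro x (⟨a, ha, rfl⟩ | rfl)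
  · exact ⟨0, a, mem_powSpan_of_mem ha c, by rw [pow_zero, mul_one]; rfl⟩
  · exact ⟨0, c, self_mem_powSpan c, by rw [pow_zero, mul_one]; rfl⟩

/-- If the image of a power series lies in the fraction field of `A`, it lies in `A`. -/
lemma mem_of_toLS_mem_fracSubfield {c : PowerSeries k} (hc : toLS k c ∈ fracSubfield k p) :
    c ∈ finiteCoeffSubring k p := by
  obtain ⟨n, a, ha, heq⟩ := hc
  rw [← map_pow, ← map_mul] at heq
  have h2 : c * PowerSeries.X ^ n = a := toLS_injective heq
  haveI := finiteDimensional_coeffField ha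
  refine mem_finiteCoeffSubring_of_forall (coeffField a) inferInstance (fun i => ?_)
  have h3 : PowerSeries.coeff i c = PowerSeries.coeff (i + n) a := by
    rw [← h2, PowerSeries.coeff_mul_X_pow]
  rw [h3]
  exact coeff_mem_coeffField a _

end Inst
section LinIndep

omit [Fact (Nat.Prime p)] in
lemma charP_LaurentSeries : CharP (LaurentSeries k) p :=
  charP_of_injective_ringHom ((toLS k).comp (PowerSeries.C (R := k))).injective p

/-- Linear independence of `1, c, …, c^(p-1)` over the fraction field of `A`,
for `c ∉ A`. -/
lemma relation_eq_zero {c : PowerSeries k} (hc : c ∉ finiteCoeffSubring k p)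
    (a : Fin p → PowerSeries k) (ha : ∀ j, a j ∈ finiteCoeffSubring k p)
    (hrel : ∑ j : Fin p, a j * c ^ (j : ℕ) = 0) : ∀ j, a j = 0 := by
  haveI := charP_LaurentSeries (k := k) (p := p)
  haveI : ExpChar (LaurentSeries k) p := ExpChar.prime (Fact.out : p.Prime)
  set K' := fracSubfield k p
  set γ : LaurentSeries k := toLS k c with hγ
  have hγK : γ ∉ K' := fun h => hc (mem_of_toLS_mem_fracSubfield h)
  have hcp : toLS k (c ^ p) ∈ K' := toLS_mem_fracSubfield (pow_p_mem_finiteCoeffSubring c)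
  set a₀ : ↥K' := ⟨toLS k (c ^ p), hcp⟩ with ha₀
  have hroot : ∀ b : ↥K', b ^ p ≠ a₀ := by
    intro b hb
    apply hγK
    have hb' : (b : LaurentSeries k) ^ p = γ ^ p := by
      have := congrArg (Subtype.val) hb
      rw [ha₀] at this
      simpa [map_pow] using this
    have : (b : LaurentSeries k) = γ :=
      frobenius_inj (LaurentSeries k) p (by rwa [frobenius_def, frobenius_def])
    rw [← this]
    exact b.2
  have hirr : Irreducible (Polynomial.X ^ p - Polynomial.C a₀) :=
    X_pow_sub_C_irreducible_of_prime (Fact.out : p.Prime) hroot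
  have haev : Polynomial.aeval γ (Polynomial.X ^ p - Polynomial.C a₀) = 0 := by
    rw [map_sub, Polynomial.aeval_X_pow, Polynomial.aeval_C]
    have : algebraMap ↥K' (LaurentSeries k) a₀ = toLS k (c ^ p) := rfl
    rw [this, hγ, ← map_pow, sub_self]
  have hminp : Polynomial.X ^ p - Polynomial.C a₀ = minpoly ↥K' γ :=
    minpoly.eq_of_irreducible_of_monic hirr haev
      (Polynomial.monic_X_pow_sub_C _ (Fact.out : p.Prime).ne_zero)
  have hdeg : (minpoly ↥K' γ).natDegree = p := by
    rw [← hminp]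
    exact Polynomial.natDegree_X_pow_sub_C
  have hli : LinearIndependent ↥K' fun i : Fin p => γ ^ (i : ℕ) := by
    have := linearIndependent_pow (K := ↥K') (S := LaurentSeries k) γ
    rwa [hdeg] at this
  rw [Fintype.linearIndependent_iff] at hli
  intro j
  set κ : Fin p → ↥K' := fun j => ⟨toLS k (a j), toLS_mem_fracSubfield (ha j)⟩ with hκ
  have hsum : ∑ i : Fin p, κ i • γ ^ (i : ℕ) = 0 := by
    have : ∀ i : Fin p, κ i • γ ^ (i : ℕ) = toLS k (a i * c ^ (i : ℕ)) := by
      intro i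
      rw [map_mul, map_pow]
      rfl
    rw [Finset.sum_congr rfl (fun i _ => this i), ← map_sum, hrel, map_zero]
  have := hli κ hsum j
  have h0 : toLS k (a j) = 0 := congrArg Subtype.val this
  exact toLS_injective (by rw [h0, map_zero])

end LinIndep
section NeTop

lemma finiteCoeffSubring_ne_top
    (hinf : ¬ FiniteDimensional ↥(pthPowerSubfield k p) k) :
    finiteCoeffSubring k p ≠ (⊤ : Subring (PowerSeries k)) := by
  classical
  set kp := ↥(pthPowerSubfield k p)
  -- for each finite-dimensional intermediate field, pick an element outside it
  have key : ∀ E : IntermediateField kp k, ∃ x : k,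
      FiniteDimensional kp ↥E → x ∉ E := by
    intro E
    by_cases hE : FiniteDimensional kp ↥E
    · by_contra h
      push_neg at h
      have hTop : E = ⊤ := eq_top_iff.mpr fun x _ => (h x).2
      apply hinf
      rw [hTop] at hE
      exact (IntermediateField.topEquiv (F := kp) (E := k)).toLinearEquiv.finiteDimensional
    · exact ⟨0, fun h => absurd h hE⟩
  set χ : IntermediateField kp k → k := fun E => (key E).choose with hχ
  set E : ℕ → IntermediateField kp k := fun n =>
    Nat.rec ⊥ (fun _ En => En ⊔ IntermediateField.adjoin kp {χ En}) n with hE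
  have hEsucc : ∀ n, E (n + 1) = E n ⊔ IntermediateField.adjoin kp {χ (E n)} := fun n => rfl
  have hFD : ∀ n, FiniteDimensional kp ↥(E n) := by
    intro n
    induction n with
    | zero => exact inferInstanceAs (FiniteDimensional kp ↥(⊥ : IntermediateField kp k))
    | succ n ih =>
      rw [hEsucc]
      haveI := ih
      haveI : FiniteDimensional kp ↥(IntermediateField.adjoin kp {χ (E n)}) :=
        IntermediateField.adjoin.finiteDimensional (isIntegral_pthPowerSubfield (χ (E n)))
      exact IntermediateField.finiteDimensional_sup _ _
  have hnot : ∀ n, χ (E n) ∉ E n := fun n => (key (E n)).choose_spec (hFD n)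
  have hmem : ∀ n, χ (E n) ∈ E (n + 1) := fun n => by
    rw [hEsucc]
    exact le_sup_right (α := IntermediateField kp k) (IntermediateField.subset_adjoin _ _ rfl)
  set f : PowerSeries k := PowerSeries.mk fun n => χ (E n) with hf
  intro htop
  have hfA : f ∈ finiteCoeffSubring k p := htop ▸ Subring.mem_top f
  haveI hFDF := finiteDimensional_coeffField hfA
  set F := (coeffField f : IntermediateField kp k) with hF
  have hcoefF : ∀ n, χ (E n) ∈ F := fun n => by
    have h2 : PowerSeries.coeff n f = χ (E n) := by rw [hf, PowerSeries.coeff_mk]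
    exact h2 ▸ coeff_mem_coeffField f n
  have hle : ∀ n, E n ≤ F := by
    intro n
    induction n with
    | zero => exact bot_le
    | succ n ih =>
      rw [hEsucc]
      refine sup_le ih ?_
      rw [IntermediateField.adjoin_le_iff]
      rintro x rfl
      exact hcoefF n
  -- build a monotone chain of submodules of the finite-dimensional space `F`
  set V : Submodule kp k := Subalgebra.toSubmodule F.toSubalgebra with hV
  have hleV : ∀ n, Subalgebra.toSubmodule (E n).toSubalgebra ≤ V := fun n x hx => hle n hx
  set ι := Submodule.MapSubtype.orderIso V
  set chain : ℕ →o Submodule kp ↥V :=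
    ⟨fun n => ι.symm ⟨Subalgebra.toSubmodule (E n).toSubalgebra, hleV n⟩, by
      intro i j hij
      apply ι.symm.monotone
      show Subalgebra.toSubmodule (E i).toSubalgebra ≤ Subalgebra.toSubmodule (E j).toSubalgebra
      intro x hx
      have hmono : ∀ m, E m ≤ E (m + 1) := fun m => by rw [hEsucc]; exact le_sup_left
      have : ∀ d m, E m ≤ E (m + d) := by
        intro d
        induction d with
        | zero => exact fun m => le_rfl
        | succ d ih => exact fun m => (ih m).trans (by rw [← Nat.add_assoc]; exact hmono (m + d))
      obtain ⟨d, rfl⟩ := Nat.exists_eq_add_of_le hij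
      exact this d i hx⟩ with hchain
  haveI : IsNoetherian kp ↥V := by
    have : FiniteDimensional kp ↥F := hFDF
    exact inferInstanceAs (IsNoetherian kp ↥F)
  obtain ⟨n, hn⟩ := monotone_stabilizes_iff_noetherian.mpr ‹IsNoetherian kp ↥V› chain
  have heq : (⟨Subalgebra.toSubmodule (E n).toSubalgebra, hleV n⟩ : {p' // p' ≤ V})
      = ⟨Subalgebra.toSubmodule (E (n + 1)).toSubalgebra, hleV (n + 1)⟩ :=
    ι.symm.injective (hn (n + 1) (Nat.le_succ n))
  have heq2 : Subalgebra.toSubmodule (E n).toSubalgebra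
      = Subalgebra.toSubmodule (E (n + 1)).toSubalgebra := congrArg Subtype.val heq
  apply hnot n
  have : χ (E n) ∈ Subalgebra.toSubmodule (E (n + 1)).toSubalgebra := hmem n
  rw [← heq2] at this
  exact this

end NeTop
section Main2

variable {c : PowerSeries k}

/-- Truncation of a power series, as an element of `A`. -/
lemma trunc_mk_mem (c : PowerSeries k) (m : ℕ) :
    (PowerSeries.mk fun n => if n < m then PowerSeries.coeff n c else 0)
      ∈ finiteCoeffSubring k p := by
  classical
  haveI : Finite ↑((fun i => PowerSeries.coeff i c) '' (Set.Iio m)) :=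
    ((Set.finite_Iio m).image _).to_subtype
  refine mem_finiteCoeffSubring_of_forall
    (IntermediateField.adjoin _ ((fun i => PowerSeries.coeff i c) '' (Set.Iio m)))
    (IntermediateField.finiteDimensional_adjoin fun x _ => isIntegral_pthPowerSubfield x)
    (fun n => ?_)
  rw [PowerSeries.coeff_mk]
  split
  · exact IntermediateField.subset_adjoin _ _ ⟨n, ‹_›, rfl⟩
  · exact zero_mem _

lemma sub_trunc_eq (c : PowerSeries k) (m : ℕ) :
    c - (PowerSeries.mk fun n => if n < m then PowerSeries.coeff n c else 0)
      = PowerSeries.X ^ m * PowerSeries.mk fun n => PowerSeries.coeff (n + m) c := by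
  ext i
  rw [map_sub, PowerSeries.coeff_mk, PowerSeries.coeff_X_pow_mul']
  by_cases h : i < m
  · rw [if_pos h, if_neg (by omega), sub_self]
  · rw [if_neg h, if_pos (by omega), sub_zero, PowerSeries.coeff_mk,
      Nat.sub_add_cancel (by omega)]

lemma not_fg_of_not_mem (hc : c ∉ finiteCoeffSubring k p) :
    letI : Algebra ↥(finiteCoeffSubring k p) ↥(adjoinElemSubfield k p c) :=
      (toAdjoinElemSubfield k p c).toAlgebra
    ¬ (Subalgebra.toSubmodule
      (integralClosure ↥(finiteCoeffSubring k p) ↥(adjoinElemSubfield k p c))).FG := by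
  letI : Algebra ↥(finiteCoeffSubring k p) ↥(adjoinElemSubfield k p c) :=
    (toAdjoinElemSubfield k p c).toAlgebra
  intro hFG
  classical
  obtain ⟨s, hs⟩ := hFG
  -- `L`-elements with a uniform denominator
  have hmem : ∀ g : ↥(adjoinElemSubfield k p c), ∃ (n : ℕ) (b : PowerSeries k),
      b ∈ powSpan k p c ∧ (g : LaurentSeries k) * (toLS k PowerSeries.X) ^ n = toLS k b :=
    fun g => adjoinElemSubfield_le_locPowSubfield c g.2
  choose nf bf hbfmem hbfeq using hmem
  set N := s.sup nf with hN
  have claim : ∀ x : ↥(adjoinElemSubfield k p c), x ∈ Submodule.span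
      ↥(finiteCoeffSubring k p) (↑s : Set ↥(adjoinElemSubfield k p c)) →
      ∃ b' ∈ powSpan k p c,
        (x : LaurentSeries k) * (toLS k PowerSeries.X) ^ N = toLS k b' := by
    intro x hx
    induction hx using Submodule.span_induction with
    | mem g hg =>
      refine ⟨PowerSeries.X ^ (N - nf g) * bf g,
        Submodule.smul_mem _ ⟨PowerSeries.X ^ (N - nf g),
          pow_mem X_mem_finiteCoeffSubring _⟩ (hbfmem g), ?_⟩
      have hle : nf g ≤ N := Finset.le_sup hg
      calc (g : LaurentSeries k) * (toLS k PowerSeries.X) ^ N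
          = ((g : LaurentSeries k) * (toLS k PowerSeries.X) ^ nf g)
            * (toLS k PowerSeries.X) ^ (N - nf g) := by
            rw [mul_assoc, ← pow_add]; congr 2; omega
        _ = toLS k (PowerSeries.X ^ (N - nf g) * bf g) := by
            rw [hbfeq g, map_mul, map_pow]; ring
    | zero => exact ⟨0, zero_mem _, by rw [ZeroMemClass.coe_zero, zero_mul, map_zero]⟩
    | add x y hx hy ihx ihy =>
      obtain ⟨b1, hb1, he1⟩ := ihx
      obtain ⟨b2, hb2, he2⟩ := ihy
      exact ⟨b1 + b2, add_mem hb1 hb2,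
        by rw [AddMemClass.coe_add, add_mul, he1, he2, map_add]⟩
    | smul a x hx ihx =>
      obtain ⟨b1, hb1, he1⟩ := ihx
      refine ⟨(a : PowerSeries k) * b1, Submodule.smul_mem _ a hb1, ?_⟩
      have hcoe : ((a • x : ↥(adjoinElemSubfield k p c)) : LaurentSeries k)
          = toLS k (a : PowerSeries k) * (x : LaurentSeries k) := rfl
      rw [hcoe, map_mul, mul_assoc, he1]
  -- the integral elements `d_m`
  set tL : ↥(adjoinElemSubfield k p c) := ⟨toLS k PowerSeries.X,
    Subfield.subset_closure (Or.inl ⟨PowerSeries.X, X_mem_finiteCoeffSubring, rfl⟩)⟩ with htL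
  set cL : ↥(adjoinElemSubfield k p c) := ⟨toLS k c,
    Subfield.subset_closure (Or.inr rfl)⟩ with hcL
  have htL0 : tL ≠ 0 := fun h => toLS_X_ne_zero (congrArg Subtype.val h)
  set m := N + 1 with hm
  set cm : PowerSeries k := PowerSeries.mk fun n => if n < m then PowerSeries.coeff n c else 0
    with hcm
  set d : PowerSeries k := PowerSeries.mk fun n => PowerSeries.coeff (n + m) c with hd
  set cmL : ↥(adjoinElemSubfield k p c) := ⟨toLS k cm,
    Subfield.subset_closure (Or.inl ⟨cm, trunc_mk_mem c m, rfl⟩)⟩ with hcmL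
  set D : ↥(adjoinElemSubfield k p c) := (cL - cmL) * (tL⁻¹) ^ m with hD
  have hDval : (D : LaurentSeries k) = toLS k d := by
    have hsub : c - cm = PowerSeries.X ^ m * d := sub_trunc_eq c m
    have h3 : ((D : ↥(adjoinElemSubfield k p c)) : LaurentSeries k)
        = (toLS k c - toLS k cm) * ((toLS k PowerSeries.X)⁻¹) ^ m := by
      rw [hD]
      push_cast
      rfl
    rw [h3, ← map_sub, hsub, map_mul, map_pow]
    rw [mul_comm (toLS k PowerSeries.X ^ m) (toLS k d), mul_assoc, ← mul_pow,
      mul_inv_cancel₀ toLS_X_ne_zero, one_pow, mul_one]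
  have hDpow : D ^ p = algebraMap ↥(finiteCoeffSubring k p) ↥(adjoinElemSubfield k p c)
      ⟨d ^ p, pow_p_mem_finiteCoeffSubring d⟩ := by
    apply Subtype.ext
    have hrhs : ((algebraMap ↥(finiteCoeffSubring k p) ↥(adjoinElemSubfield k p c)
        ⟨d ^ p, pow_p_mem_finiteCoeffSubring d⟩ : ↥(adjoinElemSubfield k p c))
          : LaurentSeries k) = toLS k (d ^ p) := rfl
    have hlhs : ((D ^ p : ↥(adjoinElemSubfield k p c)) : LaurentSeries k)
        = (D : LaurentSeries k) ^ p := by push_cast; ring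
    rw [hlhs, hrhs, hDval, ← map_pow]
  have hDint : D ∈ integralClosure ↥(finiteCoeffSubring k p) ↥(adjoinElemSubfield k p c) := by
    refine ⟨Polynomial.X ^ p - Polynomial.C ⟨d ^ p, pow_p_mem_finiteCoeffSubring d⟩,
      Polynomial.monic_X_pow_sub_C _ (Fact.out : p.Prime).ne_zero, ?_⟩
    simp only [Polynomial.eval₂_sub, Polynomial.eval₂_pow, Polynomial.eval₂_X,
      Polynomial.eval₂_C]
    rw [hDpow, sub_self]
  have hDspan : D ∈ Submodule.span ↥(finiteCoeffSubring k p)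
      (↑s : Set ↥(adjoinElemSubfield k p c)) := by
    rw [hs]
    exact hDint
  obtain ⟨b', hb'mem, hb'eq⟩ := claim D hDspan
  rw [hDval, ← map_pow, ← map_mul] at hb'eq
  have hd' : d * PowerSeries.X ^ N = b' := toLS_injective hb'eq
  -- extract the representation of `b'`
  rw [powSpan, Submodule.mem_span_range_iff_exists_fun] at hb'mem
  obtain ⟨κ, hκ⟩ := hb'mem
  -- the linear relation
  set j1 : Fin p := ⟨1, (Fact.out : p.Prime).one_lt⟩ with hj1
  set j0 : Fin p := ⟨0, (Fact.out : p.Prime).pos⟩ with hj0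
  set r : Fin p → PowerSeries k := fun j =>
    (if j = j1 then PowerSeries.X ^ N else 0) - (if j = j0 then cm * PowerSeries.X ^ N else 0)
      - PowerSeries.X ^ m * (κ j : PowerSeries k) with hr
  have hrmem : ∀ j, r j ∈ finiteCoeffSubring k p := by
    intro j
    refine sub_mem (sub_mem ?_ ?_) (mul_mem (pow_mem X_mem_finiteCoeffSubring m) (κ j).2)
    · split
      · exact pow_mem X_mem_finiteCoeffSubring N
      · exact zero_mem _
    · split
      · exact mul_mem (trunc_mk_mem c m) (pow_mem X_mem_finiteCoeffSubring N)
      · exact zero_mem _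
  have hsingle : ∀ (g : PowerSeries k) (jj : Fin p),
      ∑ j : Fin p, (if j = jj then g else 0) * c ^ (j : ℕ) = g * c ^ (jj : ℕ) := by
    intro g jj
    rw [Finset.sum_eq_single jj]
    · rw [if_pos rfl]
    · intro b _ hb
      rw [if_neg hb, zero_mul]
    · intro h
      exact absurd (Finset.mem_univ jj) h
  have hrel : ∑ j : Fin p, r j * c ^ (j : ℕ) = 0 := by
    have hexp : ∀ j : Fin p, r j * c ^ (j : ℕ)
        = (if j = j1 then PowerSeries.X ^ N else 0) * c ^ (j : ℕ)
          - (if j = j0 then cm * PowerSeries.X ^ N else 0) * c ^ (j : ℕ)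
          - (PowerSeries.X ^ m * (κ j : PowerSeries k)) * c ^ (j : ℕ) := by
      intro j
      rw [hr]
      ring
    rw [Finset.sum_congr rfl (fun j _ => hexp j), Finset.sum_sub_distrib,
      Finset.sum_sub_distrib, hsingle, hsingle]
    have hκ' : ∑ j : Fin p, (PowerSeries.X ^ m * (κ j : PowerSeries k)) * c ^ (j : ℕ)
        = PowerSeries.X ^ m * b' := by
      have hstep : ∑ j : Fin p, (PowerSeries.X ^ m * (κ j : PowerSeries k)) * c ^ (j : ℕ)
          = PowerSeries.X ^ m * ∑ j : Fin p, κ j • c ^ (j : ℕ) := by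
        rw [Finset.mul_sum]
        exact Finset.sum_congr rfl fun j _ => by
          rw [smul_eq_mul_finiteCoeffSubring]; ring
      rw [hstep, hκ]
    rw [hκ']
    have hsub : c - cm = PowerSeries.X ^ m * d := sub_trunc_eq c m
    have : PowerSeries.X ^ m * b' = (c - cm) * PowerSeries.X ^ N := by
      rw [← hd', hsub]; ring
    have hv1 : ((j1 : Fin p) : ℕ) = 1 := rfl
    have hv0 : ((j0 : Fin p) : ℕ) = 0 := rfl
    rw [this, hv1, hv0, pow_one, pow_zero, mul_one]
    ring
  have hzero := relation_eq_zero hc r hrmem hrel j1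
  have hne : j1 ≠ j0 := Fin.ne_of_val_ne one_ne_zero
  have hrj1 : r j1 = PowerSeries.X ^ N - PowerSeries.X ^ m * (κ j1 : PowerSeries k) := by
    simp [hr, hne]
  rw [hrj1, sub_eq_zero] at hzero
  -- hzero : X ^ N = X ^ m * κ j1
  have hcoeff := congrArg (PowerSeries.coeff N) hzero
  rw [PowerSeries.coeff_X_pow, if_pos rfl, PowerSeries.coeff_X_pow_mul',
    if_neg (by omega)] at hcoeff
  exact one_ne_zero hcoeff

end Main2
/-- If `[k : k^p] = ∞` then `A ≠ k⟦t⟧`, and for every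
`c ∈ k⟦t⟧ \ A` the integral closure of `A` in the finite extension `L = K(c)` of its
fraction field `K` is not a finitely generated `A`-module (so `A` is not Japanese). -/
theorem finiteCoeffSubring_ne_top_and_integralClosure_not_fg
    (hinf : ¬ FiniteDimensional ↥(pthPowerSubfield k p) k) :
    finiteCoeffSubring k p ≠ ⊤ ∧
    ∀ c : PowerSeries k, c ∉ finiteCoeffSubring k p →
      letI : Algebra ↥(finiteCoeffSubring k p) ↥(adjoinElemSubfield k p c) :=
        (toAdjoinElemSubfield k p c).toAlgebra
      ¬ (Subalgebra.toSubmodule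
        (integralClosure ↥(finiteCoeffSubring k p) ↥(adjoinElemSubfield k p c))).FG :=
  ⟨finiteCoeffSubring_ne_top hinf, fun _ hc => not_fg_of_not_mem hc⟩
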